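/- Let H be a graded connected commutative bialgebra over a ℚ-algebra K with Eulerian idempotent 𝔢 = log^*(id). Then ker 𝔢 = K·1 + (ker ε)², where (ker ε)² is the K-submodule of H spanned by products of two elements of the augmentation ideal, and the image of 𝔢 is isomorphic as a K-module to the quotient (ker ε)/(ker ε)² of indecomposables. -/

import Mathlib

open TensorProduct
section ConvolutionDefs

variable (K H : Type*) [CommRing K] [Ring H] [Bialgebra K H]

/-- Convolution product of linear endomorphisms of a bialgebra:
`f * g := m ∘ (f ⊗ g) ∘ Δ`. -/
noncomputable def conv (f g : H →ₗ[K] H) : H →ₗ[K] H :=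
  (LinearMap.mul' K H) ∘ₗ (TensorProduct.map f g) ∘ₗ (Coalgebra.comul : H →ₗ[K] H ⊗[K] H)

/-- The unit of the convolution algebra: `η ∘ ε`. -/
noncomputable def unitCounit : H →ₗ[K] H :=
  (Algebra.linearMap K H) ∘ₗ (Coalgebra.counit : H →ₗ[K] K)

/-- Convolution powers, with `f^{*0} = η∘ε` (the convolution unit) and
`f^{*(k+1)} = f * f^{*k}`. -/
noncomputable def convPow (f : H →ₗ[K] H) : ℕ → (H →ₗ[K] H)
  | 0 => unitCounit K H
  | n + 1 => conv K H f (convPow f n)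

end ConvolutionDefs

section EulerPoly
open Polynomial

namespace EulerAux

/-- `P = Y + X + XY` where the outer variable is `Y` and `C X` is the inner one. -/
noncomputable def P : Polynomial (Polynomial ℚ) := X * (1 + C X) + C X

/-- coefficient of `Y^i X^j` in `P^k`. -/
noncomputable def w (k i j : ℕ) : ℚ := (((P ^ k).coeff i).coeff j)

lemma w_zero (i j : ℕ) : w 0 i j = if i = 0 ∧ j = 0 then 1 else 0 := by
  simp only [w, pow_zero, coeff_one]
  by_cases hi : i = 0 <;> by_cases hj : j = 0 <;> simp [hi, hj, coeff_one]


lemma coeff_X_mul' {R : Type*} [Semiring R] (p : Polynomial R) (i : ℕ) :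
    (X * p).coeff i = if 1 ≤ i then p.coeff (i - 1) else 0 := by
  cases i with
  | zero => simp [mul_comm]
  | succ n => simp [coeff_X_mul]

lemma w_succ (k i j : ℕ) :
    w (k + 1) i j = (if 1 ≤ i then w k (i - 1) j else 0)
      + (if 1 ≤ j then w k i (j - 1) else 0)
      + (if 1 ≤ i ∧ 1 ≤ j then w k (i - 1) (j - 1) else 0) := by
  have hP : P ^ (k + 1) = X * (P ^ k) + C X * (P ^ k) + X * (C X * (P ^ k)) := by
    rw [pow_succ', P]; ring
  cases i <;> cases j <;>
    simp [w, hP, coeff_X_mul', coeff_C_mul, Nat.succ_sub_one] <;> ring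

lemma w_support {k i j : ℕ} (h : k < i ∨ k < j) : w k i j = 0 := by
  induction k generalizing i j with
  | zero =>
    rcases h with h | h <;> rw [w_zero] <;> simp <;> omega
  | succ k ih =>
    rw [w_succ]
    rcases le_or_gt 1 i with hi | hi <;> rcases le_or_gt 1 j with hj | hj
    · rw [if_pos hi, if_pos hj, if_pos ⟨hi, hj⟩,
        ih (by omega), ih (by omega), ih (by omega)]; ring
    · rw [if_pos hi, if_neg (by omega), if_neg (by omega), ih (by omega)]; ring
    · rw [if_neg (by omega), if_pos hj, if_neg (by omega), ih (by omega)]; ring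
    · rw [if_neg (by omega), if_neg (by omega), if_neg (by omega)]; ring

open Finset in
/-- truncated convolution logarithm applied to `P`. -/
noncomputable def F (n : ℕ) : Polynomial (Polynomial ℚ) :=
  ∑ k ∈ Icc 1 n, ((-1 : ℚ) ^ (k - 1) / (k : ℚ)) • P ^ k

lemma coeff_F (n i j : ℕ) :
    (((F n).coeff i).coeff j) = ∑ k ∈ Finset.Icc 1 n, ((-1 : ℚ) ^ (k - 1) / (k : ℚ)) * w k i j := by
  simp [F, Polynomial.finset_sum_coeff, Polynomial.coeff_smul, w, smul_eq_mul, mul_assoc]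

lemma derivative_P : derivative P = 1 + C X := by
  rw [P]
  simp only [derivative_add, derivative_mul, derivative_X, derivative_one, derivative_C]
  ring

lemma neg_P_pow_coeff {n i j : ℕ} (h : i + j < n) : ((((-P) ^ n).coeff i).coeff j) = 0 := by
  induction n generalizing i j with
  | zero => omega
  | succ m ih =>
    have : (-P) ^ (m + 1) = (-P) * (-P) ^ m := by rw [pow_succ']
    rw [this, coeff_mul, finset_sum_coeff]
    refine Finset.sum_eq_zero fun ab hab => ?_
    rw [coeff_mul]
    refine Finset.sum_eq_zero fun cd hcd => ?_
    rw [Finset.HasAntidiagonal.mem_antidiagonal] at hab hcd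
    rcases Nat.eq_zero_or_pos (ab.1 + cd.1) with h0 | h0
    · have ha : ab.1 = 0 := by omega
      have hc : cd.1 = 0 := by omega
      have : ((-P).coeff 0).coeff 0 = 0 := by simp [P]
      rw [ha, hc, this, zero_mul]
    · have : ab.2 + cd.2 < m := by omega
      rw [ih this, mul_zero]

lemma key_relation (n : ℕ) :
    (1 + (X : Polynomial (Polynomial ℚ))) * derivative (F n) = 1 - (-P) ^ n := by
  have hd : derivative (F n) = (∑ k ∈ Finset.range n, (-P) ^ k) * (1 + C X) := by
    rw [F, map_sum, ← Finset.Ico_add_one_right_eq_Icc, Finset.sum_Ico_eq_sum_range]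
    norm_num
    rw [Finset.sum_mul]
    refine Finset.sum_congr rfl fun k _ => ?_
    rw [derivative_pow, derivative_P]
    have h1 : 1 + k - 1 = k := by omega
    rw [h1]
    have h4 : (C (((1 + k : ℕ) : Polynomial ℚ)) : Polynomial (Polynomial ℚ)) * P ^ k * (1 + C X)
        = ((1 + k : ℕ) : ℚ) • (P ^ k * (1 + C X)) := by
      rw [Nat.cast_smul_eq_nsmul, nsmul_eq_mul]
      push_cast [map_add, map_one, map_natCast]
      ring
    rw [h4, smul_smul]
    have h5 : ((-1 : ℚ) ^ k / (1 + (k : ℚ))) * ((1 + k : ℕ) : ℚ) = (-1) ^ k := by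
      have : (1 + (k : ℚ)) ≠ 0 := by positivity
      push_cast
      field_simp
    rw [h5, show -P = (-1 : ℚ) • P from (neg_one_smul ℚ P).symm, _root_.smul_pow, smul_mul_assoc]
  rw [hd]
  have hg := geom_sum_mul (-P) n
  have hP' : P = X * (1 + C X) + C X := rfl
  linear_combination -hg - (∑ k ∈ Finset.range n, (-P) ^ k) * hP'

lemma one_add_CX_ne_zero : (1 + (C X : Polynomial (Polynomial ℚ))) ≠ 0 := by
  intro h
  have := congrArg (fun p => ((p : Polynomial (Polynomial ℚ)).coeff 0).coeff 1) h
  simp [Polynomial.coeff_one] at this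

lemma coeff_vanish {n i j : ℕ} (hi : 1 ≤ i) (hj : 1 ≤ j) (hn : i + j ≤ n) :
    (((F n).coeff i).coeff j) = 0 := by
  set D := derivative (F n) with hD
  have key := key_relation n
  rw [← hD] at key
  -- the coefficient relation
  have rel : ∀ a b : ℕ, a + b < n →
      (D.coeff a).coeff b + (if 1 ≤ a then (D.coeff (a - 1)).coeff b else 0)
        = (((1 : Polynomial (Polynomial ℚ)).coeff a).coeff b) := by
    intro a b hab
    have h1 : ((1 + (X : Polynomial (Polynomial ℚ))) * D) = D + X * D := by ring
    have := congrArg (fun p => ((p : Polynomial (Polynomial ℚ)).coeff a).coeff b) key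
    simp only [h1, coeff_add, coeff_X_mul', coeff_sub] at this ⊢
    rw [neg_P_pow_coeff hab, sub_zero] at this
    rcases le_or_gt 1 a with ha | ha
    · rw [if_pos ha] at this ⊢; exact this
    · rw [if_neg (by omega)] at this ⊢
      simpa using this
  -- coefficients of D with inner index ≥ 1 vanish below degree n
  have claim : ∀ a b : ℕ, 1 ≤ b → a + b < n → (D.coeff a).coeff b = 0 := by
    intro a
    induction a with
    | zero =>
      intro b hb hab
      have := rel 0 b hab
      rw [if_neg (by omega)] at this
      have h1 : (((1 : Polynomial (Polynomial ℚ)).coeff 0).coeff b) = 0 := by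
        simp [Polynomial.coeff_one, show b ≠ 0 by omega]
      rw [h1] at this
      linarith [this]
    | succ a ih =>
      intro b hb hab
      have := rel (a + 1) b hab
      rw [if_pos (by omega), Nat.add_sub_cancel] at this
      rw [ih b hb (by omega)] at this
      have h1 : (((1 : Polynomial (Polynomial ℚ)).coeff (a + 1)).coeff b) = 0 := by
        simp [Polynomial.coeff_one]
      rw [h1] at this
      linarith [this]
  -- now extract
  obtain ⟨i', rfl⟩ : ∃ i', i = i' + 1 := ⟨i - 1, by omega⟩
  have hder : (D.coeff i').coeff j = ((F n).coeff (i' + 1)).coeff j * ((i' + 1 : ℕ) : ℚ) := by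
    rw [hD, coeff_derivative]
    have h3 : ((i' : ℕ) : Polynomial ℚ) + 1 = C (((i' + 1 : ℕ)) : ℚ) := by
      push_cast; simp
    rw [h3, coeff_mul_C]
  have h0 : (D.coeff i').coeff j = 0 := claim i' j hj (by omega)
  rw [hder] at h0
  have hne : ((i' + 1 : ℕ) : ℚ) ≠ 0 := Nat.cast_ne_zero.mpr (by omega)
  exact (mul_eq_zero.mp h0).resolve_right hne

lemma vanish {n i j : ℕ} (hi : 1 ≤ i) (hj : 1 ≤ j) (hn : i + j ≤ n) :
    ∑ k ∈ Finset.Icc 1 n, ((-1 : ℚ) ^ (k - 1) / (k : ℚ)) * w k i j = 0 := by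
  rw [← coeff_F]
  exact coeff_vanish hi hj hn

end EulerAux



namespace EulerAux2

variable {K H : Type*} [CommRing K] [CommRing H] [Bialgebra K H]

lemma unitCounit_apply (x : H) :
    unitCounit K H x = algebraMap K H (Coalgebra.counit x) := rfl

lemma unitCounit_mul (x y : H) :
    unitCounit K H (x * y) = unitCounit K H x * unitCounit K H y := by
  simp [unitCounit_apply, Bialgebra.counit_mul, map_mul]

lemma unitCounit_one : unitCounit K H (1 : H) = 1 := by
  simp [unitCounit_apply]

lemma conv_apply (f g : H →ₗ[K] H) (x : H) :
    conv K H f g x = LinearMap.mul' K H (TensorProduct.map f g (Coalgebra.comul x)) := rfl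

/-- The augmentation ideal as a submodule. -/
noncomputable abbrev Iaug : Submodule K H := LinearMap.ker (Coalgebra.counit : H →ₗ[K] K)

/-- The span of products of two augmentation-ideal elements. -/
noncomputable abbrev Ssub : Submodule K H :=
  Submodule.span K
    {x : H | ∃ a ∈ LinearMap.ker (Coalgebra.counit : H →ₗ[K] K),
      ∃ b ∈ LinearMap.ker (Coalgebra.counit : H →ₗ[K] K), x = a * b}

/-- The projection `π = id - η∘ε`. -/
noncomputable abbrev piAug : H →ₗ[K] H := LinearMap.id - unitCounit K H

lemma piAug_mem_Iaug (x : H) : piAug (K := K) (H := H) x ∈ Iaug (K := K) (H := H) := by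
  simp [LinearMap.mem_ker, LinearMap.sub_apply, unitCounit_apply, map_sub,
    Bialgebra.counit_algebraMap]

lemma mul'_map_mem {M N W : Submodule K H} (hW : ∀ a ∈ M, ∀ b ∈ N, a * b ∈ W)
    {f g : H →ₗ[K] H} (hf : ∀ z, f z ∈ M) (hg : ∀ z, g z ∈ N) (t : H ⊗[K] H) :
    LinearMap.mul' K H (TensorProduct.map f g t) ∈ W := by
  induction t using TensorProduct.induction_on with
  | zero => simpa using W.zero_mem
  | tmul a b => simpa [LinearMap.mul'_apply] using hW _ (hf a) _ (hg b)
  | add t1 t2 h1 h2 => simpa [map_add] using W.add_mem h1 h2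

lemma Ssub_le_Iaug : Ssub (K := K) (H := H) ≤ Iaug (K := K) (H := H) := by
  rw [Submodule.span_le]
  rintro x ⟨a, ha, b, hb, rfl⟩
  simp only [SetLike.mem_coe, LinearMap.mem_ker] at *
  rw [Bialgebra.counit_mul, ha, hb, mul_zero]

lemma conv_mem_Iaug {f : H →ₗ[K] H} (hf : ∀ z, f z ∈ Iaug (K := K) (H := H))
    (g : H →ₗ[K] H) (x : H) : conv K H f g x ∈ Iaug (K := K) (H := H) := by
  rw [conv_apply]
  refine mul'_map_mem ?_ hf (fun z => Submodule.mem_top) _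
  intro a ha b _
  simp only [LinearMap.mem_ker] at *
  rw [Bialgebra.counit_mul, ha, zero_mul]

lemma conv_mem_Ssub {f g : H →ₗ[K] H} (hf : ∀ z, f z ∈ Iaug (K := K) (H := H))
    (hg : ∀ z, g z ∈ Iaug (K := K) (H := H)) (x : H) :
    conv K H f g x ∈ Ssub (K := K) (H := H) := by
  rw [conv_apply]
  refine mul'_map_mem ?_ hf hg _
  intro a ha b hb
  exact Submodule.subset_span ⟨a, ha, b, hb, rfl⟩

lemma convPow_mem_Iaug (k : ℕ) (x : H) :
    convPow K H (piAug (K := K) (H := H)) (k + 1) x ∈ Iaug (K := K) (H := H) := by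
  show conv K H _ _ x ∈ _
  exact conv_mem_Iaug (piAug_mem_Iaug) _ x

lemma convPow_mem_Ssub (k : ℕ) (x : H) :
    convPow K H (piAug (K := K) (H := H)) (k + 2) x ∈ Ssub (K := K) (H := H) := by
  show conv K H _ _ x ∈ _
  exact conv_mem_Ssub (piAug_mem_Iaug) (convPow_mem_Iaug k) x

/-- The convolution unit is a right unit. -/
lemma conv_unitCounit_right (f : H →ₗ[K] H) : conv K H f (unitCounit K H) = f := by
  ext x
  rw [conv_apply]
  have h1 : TensorProduct.map f (unitCounit K H)
      = (TensorProduct.map f (Algebra.linearMap K H)) ∘ₗ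
        (LinearMap.lTensor H (Coalgebra.counit : H →ₗ[K] K)) := by
    rw [LinearMap.lTensor, ← TensorProduct.map_comp, LinearMap.comp_id]
    rfl
  rw [h1, LinearMap.comp_apply, Coalgebra.lTensor_counit_comul]
  simp [LinearMap.mul'_apply]

/-- The convolution unit is a left unit. -/
lemma conv_unitCounit_left (f : H →ₗ[K] H) : conv K H (unitCounit K H) f = f := by
  ext x
  rw [conv_apply]
  have h1 : TensorProduct.map (unitCounit K H) f
      = (TensorProduct.map (Algebra.linearMap K H) f) ∘ₗ
        (LinearMap.rTensor H (Coalgebra.counit : H →ₗ[K] K)) := by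
    rw [LinearMap.rTensor, ← TensorProduct.map_comp, LinearMap.comp_id]
    rfl
  rw [h1, LinearMap.comp_apply, Coalgebra.rTensor_counit_comul]
  simp [LinearMap.mul'_apply]

lemma conv_add_left (f g h : H →ₗ[K] H) :
    conv K H (f + g) h = conv K H f h + conv K H g h := by
  ext x
  simp [conv_apply, TensorProduct.map_add_left]

lemma convPow_one' (f : H →ₗ[K] H) : convPow K H f 1 = f := by
  show conv K H f (unitCounit K H) = f
  exact conv_unitCounit_right f

end EulerAux2

namespace EulerAux2

open EulerAux Finset

variable {K H : Type*} [CommRing K] [Algebra ℚ K] [CommRing H] [Bialgebra K H]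

local notation "pp" => convPow K H (piAug (K := K) (H := H))

lemma pullif {M : Type*} [AddCommMonoid M] (c : Prop) [Decidable c] (s : Finset ℕ) (x : ℕ → M) :
    ∑ j ∈ s, (if c then x j else 0) = if c then ∑ j ∈ s, x j else 0 := by
  split_ifs <;> simp

lemma shift1 {M : Type*} [AddCommMonoid M] (f : ℕ → M) (n : ℕ) :
    ∑ i ∈ Finset.range (n + 1), (if 1 ≤ i then f i else 0) = ∑ i ∈ Finset.range n, f (i + 1) := by
  rw [Finset.sum_range_succ']
  simp

theorem FORM (k : ℕ) (x y : H) :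
    pp k (x * y) = ∑ i ∈ range (k + 1), ∑ j ∈ range (k + 1),
      algebraMap ℚ K (w k i j) • (pp i x * pp j y) := by
  induction k generalizing x y with
  | zero =>
    have h00 : w 0 0 0 = 1 := by rw [w_zero]; simp
    show unitCounit K H (x * y) = _
    simp only [zero_add, range_one, sum_singleton, h00, map_one, one_smul]
    exact unitCounit_mul x y
  | succ k ih =>
    -- the key bilinear identity
    have key : ∀ t s : H ⊗[K] H,
        LinearMap.mul' K H (TensorProduct.map (piAug (K := K) (H := H)) (pp k) (t * s)) =
        ∑ i ∈ range (k + 1), ∑ j ∈ range (k + 1), algebraMap ℚ K (w k i j) •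
          (LinearMap.mul' K H (TensorProduct.map LinearMap.id (pp i) t) *
             LinearMap.mul' K H (TensorProduct.map LinearMap.id (pp j) s)
           - LinearMap.mul' K H (TensorProduct.map (unitCounit K H) (pp i) t) *
             LinearMap.mul' K H (TensorProduct.map (unitCounit K H) (pp j) s)) := by
      intro t s
      induction t using TensorProduct.induction_on with
      | zero =>
        rw [zero_mul]
        simp
      | add t1 t2 h1 h2 =>
        simp only [add_mul, mul_add, map_add]
        rw [h1, h2, ← Finset.sum_add_distrib]
        refine Finset.sum_congr rfl fun i _ => ?_
        rw [← Finset.sum_add_distrib]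
        refine Finset.sum_congr rfl fun j _ => ?_
        rw [← smul_add]
        congr 1
        ring
      | tmul a b =>
        induction s using TensorProduct.induction_on with
        | zero =>
          rw [mul_zero]
          simp
        | add s1 s2 h1 h2 =>
          simp only [add_mul, mul_add, map_add]
          rw [h1, h2, ← Finset.sum_add_distrib]
          refine Finset.sum_congr rfl fun i _ => ?_
          rw [← Finset.sum_add_distrib]
          refine Finset.sum_congr rfl fun j _ => ?_
          rw [← smul_add]
          congr 1
          ring
        | tmul c d =>
          rw [Algebra.TensorProduct.tmul_mul_tmul]
          simp only [TensorProduct.map_tmul, LinearMap.mul'_apply, LinearMap.id_coe, id_eq]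
          rw [ih b d]
          have hpi : (piAug (K := K) (H := H)) (a * c)
              = a * c - unitCounit K H a * unitCounit K H c := by
            simp [LinearMap.sub_apply, unitCounit_mul]
          rw [hpi, Finset.mul_sum]
          refine Finset.sum_congr rfl fun i _ => ?_
          rw [Finset.mul_sum]
          refine Finset.sum_congr rfl fun j _ => ?_
          rw [mul_smul_comm]
          congr 1
          ring
    -- apply it to `comul x * comul y`
    have hstep : pp (k + 1) (x * y)
        = ∑ i ∈ range (k + 1), ∑ j ∈ range (k + 1), algebraMap ℚ K (w k i j) •
            (conv K H LinearMap.id (pp i) x * conv K H LinearMap.id (pp j) y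
             - conv K H (unitCounit K H) (pp i) x * conv K H (unitCounit K H) (pp j) y) := by
      show LinearMap.mul' K H (TensorProduct.map _ (pp k) (Coalgebra.comul (x * y))) = _
      rw [Bialgebra.comul_mul, key]
      rfl
    -- rewrite the convolutions
    have hconv : ∀ (i : ℕ) (z : H), conv K H LinearMap.id (pp i) z = pp i z + pp (i + 1) z := by
      intro i z
      have hid : (LinearMap.id : H →ₗ[K] H) = unitCounit K H + piAug (K := K) (H := H) := by
        rw [piAug]; abel
      conv_lhs => rw [hid]
      rw [conv_add_left, LinearMap.add_apply, conv_unitCounit_left]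
      rfl
    simp only [hconv, conv_unitCounit_left] at hstep
    -- now the coefficient shuffling
    rw [hstep]
    have expand : ∀ (i j : ℕ),
        algebraMap ℚ K (w k i j) •
          ((pp i x + pp (i + 1) x) * (pp j y + pp (j + 1) y) - pp i x * pp j y)
        = algebraMap ℚ K (w k i j) • (pp (i + 1) x * pp j y)
          + algebraMap ℚ K (w k i j) • (pp i x * pp (j + 1) y)
          + algebraMap ℚ K (w k i j) • (pp (i + 1) x * pp (j + 1) y) := by
      intro i j
      rw [← smul_add, ← smul_add]
      congr 1
      ring
    simp only [expand]
    have rhs_eq : ∑ i ∈ range (k + 1 + 1), ∑ j ∈ range (k + 1 + 1),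
        algebraMap ℚ K (w (k + 1) i j) • (pp i x * pp j y)
        = (∑ i ∈ range (k + 1 + 1), ∑ j ∈ range (k + 1 + 1),
            (if 1 ≤ i then algebraMap ℚ K (w k (i - 1) j) • (pp i x * pp j y) else 0))
          + (∑ i ∈ range (k + 1 + 1), ∑ j ∈ range (k + 1 + 1),
            (if 1 ≤ j then algebraMap ℚ K (w k i (j - 1)) • (pp i x * pp j y) else 0))
          + (∑ i ∈ range (k + 1 + 1), ∑ j ∈ range (k + 1 + 1),
            (if 1 ≤ i ∧ 1 ≤ j then algebraMap ℚ K (w k (i - 1) (j - 1)) • (pp i x * pp j y)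
              else 0)) := by
      rw [← Finset.sum_add_distrib, ← Finset.sum_add_distrib]
      refine Finset.sum_congr rfl fun i _ => ?_
      rw [← Finset.sum_add_distrib, ← Finset.sum_add_distrib]
      refine Finset.sum_congr rfl fun j _ => ?_
      rw [w_succ, map_add, map_add, add_smul, add_smul]
      congr 1
      · congr 1
        · split_ifs <;> simp
        · split_ifs <;> simp
      · split_ifs <;> simp
    have T1 : ∑ i ∈ range (k + 1 + 1), ∑ j ∈ range (k + 1 + 1),
        (if 1 ≤ i then algebraMap ℚ K (w k (i - 1) j) • (pp i x * pp j y) else 0)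
        = ∑ i ∈ range (k + 1), ∑ j ∈ range (k + 1),
            algebraMap ℚ K (w k i j) • (pp (i + 1) x * pp j y) := by
      rw [Finset.sum_congr rfl fun i _ => pullif (1 ≤ i) _ _, shift1]
      refine Finset.sum_congr rfl fun i _ => ?_
      simp only [Nat.add_sub_cancel]
      rw [Finset.sum_range_succ, w_support (Or.inr (by omega)), map_zero, zero_smul, add_zero]
    have T2 : ∑ i ∈ range (k + 1 + 1), ∑ j ∈ range (k + 1 + 1),
        (if 1 ≤ j then algebraMap ℚ K (w k i (j - 1)) • (pp i x * pp j y) else 0)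
        = ∑ i ∈ range (k + 1), ∑ j ∈ range (k + 1),
            algebraMap ℚ K (w k i j) • (pp i x * pp (j + 1) y) := by
      have inner : ∀ i : ℕ, ∑ j ∈ range (k + 1 + 1),
          (if 1 ≤ j then algebraMap ℚ K (w k i (j - 1)) • (pp i x * pp j y) else 0)
          = ∑ j ∈ range (k + 1), algebraMap ℚ K (w k i j) • (pp i x * pp (j + 1) y) := by
        intro i
        rw [shift1]
        refine Finset.sum_congr rfl fun j _ => ?_
        simp only [Nat.add_sub_cancel]
      rw [Finset.sum_congr rfl fun i _ => inner i, Finset.sum_range_succ]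
      have hlast : ∑ j ∈ range (k + 1),
          algebraMap ℚ K (w k (k + 1) j) • (pp (k + 1) x * pp (j + 1) y) = 0 :=
        Finset.sum_eq_zero fun j _ => by
          rw [w_support (Or.inl (by omega)), map_zero, zero_smul]
      rw [hlast, add_zero]
    have T3 : ∑ i ∈ range (k + 1 + 1), ∑ j ∈ range (k + 1 + 1),
        (if 1 ≤ i ∧ 1 ≤ j then algebraMap ℚ K (w k (i - 1) (j - 1)) • (pp i x * pp j y) else 0)
        = ∑ i ∈ range (k + 1), ∑ j ∈ range (k + 1),
            algebraMap ℚ K (w k i j) • (pp (i + 1) x * pp (j + 1) y) := by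
      simp only [ite_and]
      rw [Finset.sum_congr rfl fun i _ => pullif (1 ≤ i) _ _, shift1]
      refine Finset.sum_congr rfl fun i _ => ?_
      rw [shift1]
      refine Finset.sum_congr rfl fun j _ => ?_
      simp only [Nat.add_sub_cancel]
    rw [rhs_eq, T1, T2, T3, ← Finset.sum_add_distrib, ← Finset.sum_add_distrib]
    refine Finset.sum_congr rfl fun i _ => ?_
    rw [← Finset.sum_add_distrib, ← Finset.sum_add_distrib]

section WithE

variable (e : H →ₗ[K] H)
variable (he : ∀ a : H, ∃ N : ℕ, ∀ n ≥ N,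
      e a = ∑ k ∈ Finset.Icc 1 n,
        (algebraMap ℚ K ((-1 : ℚ) ^ (k - 1) / (k : ℚ))) •
          convPow K H (LinearMap.id - unitCounit K H) k a)

include he

lemma nilp (a : H) : ∃ M : ℕ, ∀ k, M ≤ k → pp k a = 0 := by
  obtain ⟨N, hN⟩ := he a
  refine ⟨max N 1 + 1, fun k hk => ?_⟩
  obtain ⟨m, rfl⟩ : ∃ m, k = m + 1 := ⟨k - 1, by omega⟩
  have h1 := hN m (by omega)
  have h2 := hN (m + 1) (by omega)
  rw [Finset.sum_Icc_succ_top (by omega : 1 ≤ m + 1), ← h1] at h2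
  have h3 : (algebraMap ℚ K ((-1 : ℚ) ^ (m + 1 - 1) / ((m + 1 : ℕ) : ℚ))) • pp (m + 1) a = 0 :=
    (left_eq_add.mp h2)
  have hq : ((-1 : ℚ) ^ (m + 1 - 1) / ((m + 1 : ℕ) : ℚ)) ≠ 0 := by
    apply div_ne_zero
    · exact pow_ne_zero _ (by norm_num)
    · exact Nat.cast_ne_zero.mpr (by omega)
  obtain ⟨c, hc⟩ := ((isUnit_iff_ne_zero.mpr hq).map (algebraMap ℚ K)).exists_left_inv
  calc pp (m + 1) a
      = (c * (algebraMap ℚ K ((-1 : ℚ) ^ (m + 1 - 1) / ((m + 1 : ℕ) : ℚ)))) • pp (m + 1) a := by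
        rw [hc, one_smul]
    _ = c • ((algebraMap ℚ K ((-1 : ℚ) ^ (m + 1 - 1) / ((m + 1 : ℕ) : ℚ))) • pp (m + 1) a) :=
        mul_smul _ _ _
    _ = 0 := by rw [h3, smul_zero]

lemma e_one : e (1 : H) = 0 := by
  obtain ⟨N, hN⟩ := he 1
  rw [hN (max N 1) (le_max_left _ _)]
  refine Finset.sum_eq_zero fun k hk => ?_
  rw [Finset.mem_Icc] at hk
  obtain ⟨m, rfl⟩ : ∃ m, k = m + 1 := ⟨k - 1, by omega⟩
  have hzero : pp (m + 1) (1 : H) = 0 := by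
    show conv K H _ _ 1 = 0
    rw [conv_apply, Bialgebra.comul_one, Algebra.TensorProduct.one_def]
    rw [TensorProduct.map_tmul, LinearMap.mul'_apply]
    have hpi1 : (piAug (K := K) (H := H)) 1 = 0 := by
      simp [LinearMap.sub_apply, unitCounit_apply]
    rw [hpi1, zero_mul]
  rw [hzero, smul_zero]

lemma e_prod (x y : H) (hx : (Coalgebra.counit : H →ₗ[K] K) x = 0)
    (hy : (Coalgebra.counit : H →ₗ[K] K) y = 0) : e (x * y) = 0 := by
  obtain ⟨Mx, hMx⟩ := nilp e he x
  obtain ⟨My, hMy⟩ := nilp e he y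
  obtain ⟨N, hN⟩ := he (x * y)
  set n := N + Mx + My + 2 with hn
  rw [hN n (by omega)]
  have hterm : ∀ k ∈ Finset.Icc 1 n,
      (algebraMap ℚ K ((-1 : ℚ) ^ (k - 1) / (k : ℚ))) • pp k (x * y)
      = ∑ i ∈ range (n + 1), ∑ j ∈ range (n + 1),
          algebraMap ℚ K (((-1 : ℚ) ^ (k - 1) / (k : ℚ)) * w k i j) • (pp i x * pp j y) := by
    intro k hk
    rw [Finset.mem_Icc] at hk
    have hk' : k + 1 ≤ n + 1 := by omega
    rw [FORM]
    have inner_ext : ∀ i : ℕ,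
        ∑ j ∈ range (k + 1), algebraMap ℚ K (w k i j) • (pp i x * pp j y)
        = ∑ j ∈ range (n + 1), algebraMap ℚ K (w k i j) • (pp i x * pp j y) := fun i =>
      Finset.sum_subset (Finset.range_subset_range.mpr hk') fun j _ hj => by
        rw [w_support (Or.inr (by simp only [Finset.mem_range, not_lt] at hj; omega)),
          map_zero, zero_smul]
    rw [Finset.sum_congr rfl fun i _ => inner_ext i]
    rw [Finset.sum_subset (Finset.range_subset_range.mpr hk') fun i _ hi =>
      Finset.sum_eq_zero fun j _ => by
        rw [w_support (Or.inl (by simp only [Finset.mem_range, not_lt] at hi; omega)),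
          map_zero, zero_smul]]
    rw [Finset.smul_sum]
    refine Finset.sum_congr rfl fun i _ => ?_
    rw [Finset.smul_sum]
    refine Finset.sum_congr rfl fun j _ => ?_
    rw [smul_smul, ← map_mul]
  rw [Finset.sum_congr rfl hterm, Finset.sum_comm]
  refine Finset.sum_eq_zero fun i hi => ?_
  rw [Finset.sum_comm]
  refine Finset.sum_eq_zero fun j hj => ?_
  by_cases hi0 : i = 0
  · subst hi0
    have h0 : pp 0 x = 0 := by
      show unitCounit K H x = 0
      rw [unitCounit_apply, hx, map_zero]
    refine Finset.sum_eq_zero fun k _ => ?_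
    rw [h0, zero_mul, smul_zero]
  by_cases hj0 : j = 0
  · subst hj0
    have h0 : pp 0 y = 0 := by
      show unitCounit K H y = 0
      rw [unitCounit_apply, hy, map_zero]
    refine Finset.sum_eq_zero fun k _ => ?_
    rw [h0, mul_zero, smul_zero]
  by_cases hix : Mx ≤ i
  · refine Finset.sum_eq_zero fun k _ => ?_
    rw [hMx i hix, zero_mul, smul_zero]
  by_cases hjy : My ≤ j
  · refine Finset.sum_eq_zero fun k _ => ?_
    rw [hMy j hjy, mul_zero, smul_zero]
  have hv := vanish (show 1 ≤ i by omega) (show 1 ≤ j by omega)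
    (show i + j ≤ n by omega)
  rw [← Finset.sum_smul, ← map_sum, hv, map_zero, zero_smul]

lemma e_congr (z : H) :
    e z - z + unitCounit K H z ∈ Ssub (K := K) (H := H) := by
  obtain ⟨N, hN⟩ := he z
  rw [hN (max N 1) (le_max_left _ _)]
  have hsplit : Finset.Icc 1 (max N 1) = insert 1 (Finset.Icc 2 (max N 1)) := by
    ext m
    simp only [Finset.mem_Icc, Finset.mem_insert]
    omega
  rw [hsplit, Finset.sum_insert (by simp [Finset.mem_Icc])]
  have h1 : (algebraMap ℚ K ((-1 : ℚ) ^ (1 - 1) / ((1 : ℕ) : ℚ))) • pp 1 z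
      = z - unitCounit K H z := by
    norm_num
    rw [convPow_one']
    rfl
  have h2 : ∑ k ∈ Finset.Icc 2 (max N 1),
      (algebraMap ℚ K ((-1 : ℚ) ^ (k - 1) / (k : ℚ))) • pp k z ∈ Ssub (K := K) (H := H) :=
    Submodule.sum_mem _ fun k hk => by
      rw [Finset.mem_Icc] at hk
      obtain ⟨m, rfl⟩ : ∃ m, k = m + 2 := ⟨k - 2, by omega⟩
      exact Submodule.smul_mem _ _ (convPow_mem_Ssub m z)
  have heq : ∀ s : H, (z - unitCounit K H z + s) - z + unitCounit K H z = s := fun s => by abel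
  rw [h1, heq]
  exact h2

end WithE

end EulerAux2


end EulerPoly

/-- for a commutative graded connected bialgebra `H` over a ℚ-algebra `K`
with Eulerian idempotent `𝔢 = log^*(id)`, one has `ker 𝔢 = K·1 + (ker ε)²` and
`Im 𝔢 ≅ (ker ε)/(ker ε)²` as `K`-modules. -/
theorem eulerian_idempotent_ker_im {K H : Type*} [CommRing K] [Algebra ℚ K]
    [CommRing H] [Bialgebra K H]
    (𝒜 : ℕ → Submodule K H)
    (hinternal : DirectSum.IsInternal 𝒜)
    (hconnected : 𝒜 0 = (1 : Submodule K H))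
    (hmul : ∀ i j, 𝒜 i * 𝒜 j ≤ 𝒜 (i + j))
    (hcomul : ∀ n, ∀ x ∈ 𝒜 n,
      (Coalgebra.comul : H →ₗ[K] H ⊗[K] H) x ∈
        ⨆ (p : ℕ × ℕ) (_ : p.1 + p.2 = n),
          LinearMap.range (TensorProduct.map (𝒜 p.1).subtype (𝒜 p.2).subtype))
    (e : H →ₗ[K] H)
    (he : ∀ a : H, ∃ N : ℕ, ∀ n ≥ N,
      e a = ∑ k ∈ Finset.Icc 1 n,
        (algebraMap ℚ K ((-1 : ℚ) ^ (k - 1) / (k : ℚ))) •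
          convPow K H (LinearMap.id - unitCounit K H) k a) :
    LinearMap.ker e =
      Submodule.span K {(1 : H)} ⊔
        Submodule.span K
          {x : H | ∃ a ∈ LinearMap.ker (Coalgebra.counit : H →ₗ[K] K),
            ∃ b ∈ LinearMap.ker (Coalgebra.counit : H →ₗ[K] K), x = a * b} ∧
    Nonempty
      ((LinearMap.range e) ≃ₗ[K]
        (LinearMap.ker (Coalgebra.counit : H →ₗ[K] K) ⧸
          Submodule.comap (LinearMap.ker (Coalgebra.counit : H →ₗ[K] K)).subtype
            (Submodule.span K
              {x : H | ∃ a ∈ LinearMap.ker (Coalgebra.counit : H →ₗ[K] K),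
                ∃ b ∈ LinearMap.ker (Coalgebra.counit : H →ₗ[K] K), x = a * b}))) := by
  classical
  have hker : LinearMap.ker e =
      Submodule.span K {(1 : H)} ⊔ EulerAux2.Ssub (K := K) (H := H) := by
    apply le_antisymm
    · intro z hz
      rw [LinearMap.mem_ker] at hz
      have hc := EulerAux2.e_congr e he z
      rw [hz, zero_sub] at hc
      have h1 : unitCounit K H z ∈ Submodule.span K {(1 : H)} := by
        rw [EulerAux2.unitCounit_apply, Algebra.algebraMap_eq_smul_one]
        exact Submodule.smul_mem _ _ (Submodule.mem_span_singleton_self 1)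
      exact Submodule.mem_sup.mpr
        ⟨unitCounit K H z, h1, -(-z + unitCounit K H z), Submodule.neg_mem _ hc, by abel⟩
    · rw [sup_le_iff]
      constructor
      · rw [Submodule.span_le]
        rintro x rfl
        simp only [SetLike.mem_coe, LinearMap.mem_ker]
        exact EulerAux2.e_one e he
      · rw [Submodule.span_le]
        rintro x ⟨a, ha, b, hb, rfl⟩
        simp only [SetLike.mem_coe, LinearMap.mem_ker]
        exact EulerAux2.e_prod e he a b (LinearMap.mem_ker.mp ha) (LinearMap.mem_ker.mp hb)
  refine ⟨hker, ?_⟩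
  set I : Submodule K H := LinearMap.ker (Coalgebra.counit : H →ₗ[K] K) with hI
  set g : I →ₗ[K] H := e ∘ₗ I.subtype with hg
  have hrange : LinearMap.range g = LinearMap.range e := by
    apply le_antisymm
    · rintro _ ⟨a, rfl⟩
      exact ⟨a, rfl⟩
    · rintro _ ⟨z, rfl⟩
      have hmem : z - unitCounit K H z ∈ I := by
        rw [hI, LinearMap.mem_ker, map_sub, EulerAux2.unitCounit_apply,
          Bialgebra.counit_algebraMap, sub_self]
      refine ⟨⟨z - unitCounit K H z, hmem⟩, ?_⟩
      show e (z - unitCounit K H z) = e z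
      rw [map_sub, EulerAux2.unitCounit_apply, Algebra.algebraMap_eq_smul_one, map_smul,
        EulerAux2.e_one e he, smul_zero, sub_zero]
  have hkerg : LinearMap.ker g = Submodule.comap I.subtype
      (EulerAux2.Ssub (K := K) (H := H)) := by
    ext a
    simp only [LinearMap.mem_ker, Submodule.mem_comap, hg, LinearMap.comp_apply,
      Submodule.subtype_apply]
    constructor
    · intro h
      have hmem : (a : H) ∈ Submodule.span K {(1 : H)} ⊔ EulerAux2.Ssub (K := K) (H := H) := by
        rw [← hker]
        exact h
      obtain ⟨p, hp, q, hq, hpq⟩ := Submodule.mem_sup.mp hmem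
      obtain ⟨c, rfl⟩ := Submodule.mem_span_singleton.mp hp
      have hεa : (Coalgebra.counit : H →ₗ[K] K) (a : H) = 0 := a.2
      have hεq : (Coalgebra.counit : H →ₗ[K] K) q = 0 :=
        LinearMap.mem_ker.mp (EulerAux2.Ssub_le_Iaug hq)
      have hc0 : c = 0 := by
        have := congrArg (Coalgebra.counit : H →ₗ[K] K) hpq
        rw [map_add, map_smul, hεq, add_zero, Bialgebra.counit_one] at this
        rw [hεa] at this
        simpa using this
      rw [hc0, zero_smul, zero_add] at hpq
      rw [← hpq]
      exact hq
    · intro h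
      have : (a : H) ∈ LinearMap.ker e := by
        rw [hker]
        exact Submodule.mem_sup_right h
      exact LinearMap.mem_ker.mp this
  exact ⟨((LinearEquiv.ofEq _ _ hrange.symm).trans
    (LinearMap.quotKerEquivRange g).symm).trans (Submodule.quotEquivOfEq _ _ hkerg)⟩
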